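/- Every nondeterministic unitary OBDD computing AND_n (the conjunction of n Boolean variables) has width at least n+1; moreover there is a nondeterministic unitary OBDD of width n+1 computing AND_n. -/

import Mathlib

set_option maxHeartbeats 1000000


open scoped BigOperators

/-- State of a nondeterministic unitary OBDD of width `d` after reading input `x`
in variable order `π`: at step `j` the unitary `U j b` is applied, where `b` is the
value of the tested variable `x_{π j}`. -/
noncomputable def nuRun {n d : ℕ} (U : Fin n → Bool → Matrix (Fin d) (Fin d) ℂ)
    (π : Equiv.Perm (Fin n)) (init : Fin d → ℂ) (x : Fin n → Bool) : Fin d → ℂ :=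
  (List.ofFn fun j : Fin n => U j (x (π j))).foldl (fun v M => M.mulVec v) init

/-- All transition matrices are unitary. -/
def IsUnitaryFamily {n d : ℕ} (U : Fin n → Bool → Matrix (Fin d) (Fin d) ℂ) : Prop :=
  ∀ j b, U j b ∈ Matrix.unitaryGroup (Fin d) ℂ

/-- The initial state is a unit vector. -/
def NormalizedInit {d : ℕ} (init : Fin d → ℂ) : Prop :=
  ∑ q, ‖init q‖ ^ 2 = 1

/-- Nondeterministic acceptance: the projection of the final state onto the
accepting subspace (spanned by the accepting basis states `acc`) is nonzero. -/
def nuAccepts {n d : ℕ} (U : Fin n → Bool → Matrix (Fin d) (Fin d) ℂ)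
    (π : Equiv.Perm (Fin n)) (init : Fin d → ℂ) (acc : Finset (Fin d))
    (x : Fin n → Bool) : Prop :=
  ∃ q ∈ acc, nuRun U π init x q ≠ 0

/-- The NUOBDD computes `f`: it accepts exactly the inputs in `f⁻¹(1)`. -/
def nuComputes {n d : ℕ} (U : Fin n → Bool → Matrix (Fin d) (Fin d) ℂ)
    (π : Equiv.Perm (Fin n)) (init : Fin d → ℂ) (acc : Finset (Fin d))
    (f : (Fin n → Bool) → Bool) : Prop :=
  ∀ x, nuAccepts U π init acc x ↔ f x = true

/-- Number of 1s in the input. -/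
def countOnes {n : ℕ} (x : Fin n → Bool) : ℕ :=
  (Finset.univ.filter fun i => x i = true).card

/-- `AND_n(σ) = 1` iff all bits of `σ` are 1. -/
def ANDn (n : ℕ) (x : Fin n → Bool) : Bool := decide (∀ i, x i = true)

namespace NUAux

open Fin.NatCast

variable {n d : ℕ}

/-- The `i`-th transition matrix on input `x` (identity out of range). -/
noncomputable def step (U : Fin n → Bool → Matrix (Fin d) (Fin d) ℂ)
    (π : Equiv.Perm (Fin n)) (x : Fin n → Bool) (i : ℕ) : Matrix (Fin d) (Fin d) ℂ :=
  if h : i < n then U ⟨i, h⟩ (x (π ⟨i, h⟩)) else 1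

/-- Product of the first `m` transition matrices (latest on the left). -/
noncomputable def pref (U : Fin n → Bool → Matrix (Fin d) (Fin d) ℂ)
    (π : Equiv.Perm (Fin n)) (x : Fin n → Bool) : ℕ → Matrix (Fin d) (Fin d) ℂ
  | 0 => 1
  | m + 1 => step U π x m * pref U π x m

/-- Product of `k` transition matrices starting at position `m`. -/
noncomputable def suff (U : Fin n → Bool → Matrix (Fin d) (Fin d) ℂ)
    (π : Equiv.Perm (Fin n)) (x : Fin n → Bool) : ℕ → ℕ → Matrix (Fin d) (Fin d) ℂ
  | 0, _ => 1
  | k + 1, m => suff U π x k (m + 1) * step U π x m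

lemma foldl_mulVec (L : List (Matrix (Fin d) (Fin d) ℂ)) (v : Fin d → ℂ) :
    L.foldl (fun w M => M.mulVec w) v = L.reverse.prod.mulVec v := by
  induction L generalizing v with
  | nil => simp
  | cons M L ih =>
      simp [List.foldl_cons, ih, Matrix.mulVec_mulVec]

lemma ofFn_step_prod (U : Fin n → Bool → Matrix (Fin d) (Fin d) ℂ)
    (π : Equiv.Perm (Fin n)) (x : Fin n → Bool) :
    ∀ m : ℕ, (List.ofFn fun j : Fin m => step U π x j).reverse.prod = pref U π x m := by
  intro m
  induction m with
  | zero => simp [pref]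
  | succ m ih =>
      rw [List.ofFn_succ']
      simp only [Fin.coe_castSucc, Fin.val_last, List.concat_eq_append,
        List.reverse_append, List.reverse_cons, List.reverse_nil, List.nil_append,
        List.cons_append, List.prod_cons]
      rw [ih]
      rfl

lemma nuRun_eq (U : Fin n → Bool → Matrix (Fin d) (Fin d) ℂ)
    (π : Equiv.Perm (Fin n)) (init : Fin d → ℂ) (x : Fin n → Bool) :
    nuRun U π init x = (pref U π x n).mulVec init := by
  have h1 : (List.ofFn fun j : Fin n => U j (x (π j)))
      = List.ofFn fun j : Fin n => step U π x j := by
    refine congrArg List.ofFn (funext fun j => ?_)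
    simp [step, j.isLt]
  rw [nuRun, h1, foldl_mulVec, ofFn_step_prod]

lemma isUnit_step {U : Fin n → Bool → Matrix (Fin d) (Fin d) ℂ}
    (hU : IsUnitaryFamily U) (π : Equiv.Perm (Fin n)) (x : Fin n → Bool) (i : ℕ) :
    IsUnit (step U π x i) := by
  unfold step
  split
  · next h =>
      have hm := hU ⟨i, h⟩ (x (π ⟨i, h⟩))
      exact ⟨⟨_, star (U ⟨i, h⟩ (x (π ⟨i, h⟩))),
        Matrix.mem_unitaryGroup_iff.mp hm, Matrix.mem_unitaryGroup_iff'.mp hm⟩, rfl⟩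
  · exact isUnit_one

lemma isUnit_suff {U : Fin n → Bool → Matrix (Fin d) (Fin d) ℂ}
    (hU : IsUnitaryFamily U) (π : Equiv.Perm (Fin n)) (x : Fin n → Bool) :
    ∀ k m : ℕ, IsUnit (suff U π x k m) := by
  intro k
  induction k with
  | zero => intro m; exact isUnit_one
  | succ k ih => intro m; exact (ih (m + 1)).mul (isUnit_step hU π x m)

lemma suff_mul_pref (U : Fin n → Bool → Matrix (Fin d) (Fin d) ℂ)
    (π : Equiv.Perm (Fin n)) (x : Fin n → Bool) :
    ∀ k m : ℕ, suff U π x k m * pref U π x m = pref U π x (m + k) := by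
  intro k
  induction k with
  | zero => intro m; simp [suff]
  | succ k ih =>
      intro m
      have h1 : step U π x m * pref U π x m = pref U π x (m + 1) := rfl
      rw [show m + (k + 1) = (m + 1) + k by omega, ← ih (m + 1), ← h1]
      show suff U π x k (m + 1) * step U π x m * pref U π x m = _
      rw [mul_assoc]

lemma pref_congr (U : Fin n → Bool → Matrix (Fin d) (Fin d) ℂ)
    (π : Equiv.Perm (Fin n)) (x z : Fin n → Bool) :
    ∀ m : ℕ, (∀ j : Fin n, (j : ℕ) < m → x (π j) = z (π j)) →
      pref U π x m = pref U π z m := by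
  intro m
  induction m with
  | zero => intro _; rfl
  | succ m ih =>
      intro hx
      have h1 : pref U π x m = pref U π z m := ih fun j hj => hx j (by omega)
      have h2 : step U π x m = step U π z m := by
        unfold step
        split
        · next h => rw [hx ⟨m, h⟩ (Nat.lt_succ_self m)]
        · rfl
      show step U π x m * pref U π x m = step U π z m * pref U π z m
      rw [h1, h2]

lemma suff_congr (U : Fin n → Bool → Matrix (Fin d) (Fin d) ℂ)
    (π : Equiv.Perm (Fin n)) (x z : Fin n → Bool) :
    ∀ (k m : ℕ), (∀ j : Fin n, m ≤ (j : ℕ) → x (π j) = z (π j)) →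
      suff U π x k m = suff U π z k m := by
  intro k
  induction k with
  | zero => intro m _; rfl
  | succ k ih =>
      intro m hx
      have h1 : suff U π x k (m + 1) = suff U π z k (m + 1) :=
        ih (m + 1) fun j hj => hx j (by omega)
      have h2 : step U π x m = step U π z m := by
        unfold step
        split
        · next h => rw [hx ⟨m, h⟩ (le_refl m)]
        · rfl
      show suff U π x k (m + 1) * step U π x m = suff U π z k (m + 1) * step U π z m
      rw [h1, h2]

/-- The input whose bits (in test order) are 0 exactly on positions in `[k, m)`. -/
def yInp (π : Equiv.Perm (Fin n)) (k m : ℕ) : Fin n → Bool :=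
  fun i => decide ((π.symm i : ℕ) < k) || decide (m ≤ (π.symm i : ℕ))

lemma yInp_apply (π : Equiv.Perm (Fin n)) (k m : ℕ) (j : Fin n) :
    yInp π k m (π j) = (decide ((j : ℕ) < k) || decide (m ≤ (j : ℕ))) := by
  simp [yInp]

lemma ANDn_yInp_self (π : Equiv.Perm (Fin n)) (m : ℕ) :
    ANDn n (yInp π m m) = true := by
  simp only [ANDn, decide_eq_true_eq]
  intro i
  simp only [yInp, Bool.or_eq_true, decide_eq_true_eq]
  omega

lemma ANDn_yInp_lt (π : Equiv.Perm (Fin n)) {k m : ℕ} (hk : k < m) (hm : m ≤ n) :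
    ANDn n (yInp π k m) = false := by
  have hkn : k < n := lt_of_lt_of_le hk hm
  simp only [ANDn, decide_eq_false_iff_not]
  intro hall
  have h := hall (π ⟨k, hkn⟩)
  rw [yInp_apply] at h
  simp only [Bool.or_eq_true, decide_eq_true_eq] at h
  omega

lemma exists_L {n d : ℕ} (U : Fin n → Bool → Matrix (Fin d) (Fin d) ℂ)
    (π : Equiv.Perm (Fin n)) (init : Fin d → ℂ)
    (hU : IsUnitaryFamily U) {mm : ℕ} (hmn : mm ≤ n) :
    ∃ L : Matrix (Fin d) (Fin d) ℂ, ∀ k : ℕ, k ≤ mm →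
      L.mulVec (nuRun U π init (yInp π k n)) = nuRun U π init (yInp π k mm) := by
  have hS0u : IsUnit (suff U π (fun _ => false) (n - mm) mm) := isUnit_suff hU π _ _ _
  refine ⟨suff U π (fun _ => true) (n - mm) mm
    * (↑hS0u.unit⁻¹ : Matrix (Fin d) (Fin d) ℂ), fun k hk => ?_⟩
  have e0 : pref U π (yInp π k n) n
      = suff U π (fun _ => false) (n - mm) mm * pref U π (yInp π k n) mm := by
    have h1 := suff_mul_pref U π (yInp π k n) (n - mm) mm
    rw [Nat.add_sub_cancel' hmn] at h1
    have h2 : suff U π (yInp π k n) (n - mm) mm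
        = suff U π (fun _ => false) (n - mm) mm := by
      refine suff_congr U π _ _ _ _ fun j hj => ?_
      have hjn : (j : ℕ) < n := j.isLt
      rw [yInp_apply]
      have e1 : decide ((j : ℕ) < k) = false := by
        simp only [decide_eq_false_iff_not]; omega
      have e2 : decide (n ≤ (j : ℕ)) = false := by
        simp only [decide_eq_false_iff_not]; omega
      rw [e1, e2]
      rfl
    rw [h2] at h1
    exact h1.symm
  have e1 : pref U π (yInp π k mm) n
      = suff U π (fun _ => true) (n - mm) mm * pref U π (yInp π k mm) mm := by
    have h1 := suff_mul_pref U π (yInp π k mm) (n - mm) mm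
    rw [Nat.add_sub_cancel' hmn] at h1
    have h2 : suff U π (yInp π k mm) (n - mm) mm
        = suff U π (fun _ => true) (n - mm) mm := by
      refine suff_congr U π _ _ _ _ fun j hj => ?_
      rw [yInp_apply]
      have e2 : decide (mm ≤ (j : ℕ)) = true := by
        simp only [decide_eq_true_eq]; omega
      rw [e2, Bool.or_true]
    rw [h2] at h1
    exact h1.symm
  have epre : pref U π (yInp π k mm) mm = pref U π (yInp π k n) mm := by
    refine pref_congr U π _ _ _ fun j hj => ?_
    have hjn : (j : ℕ) < n := j.isLt
    rw [yInp_apply, yInp_apply]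
    have e2 : decide (mm ≤ (j : ℕ)) = false := by
      simp only [decide_eq_false_iff_not]; omega
    have e3 : decide (n ≤ (j : ℕ)) = false := by
      simp only [decide_eq_false_iff_not]; omega
    rw [e2, e3]
  rw [nuRun_eq, nuRun_eq, e0, e1, epre, Matrix.mulVec_mulVec]
  rw [mul_assoc, ← mul_assoc (↑hS0u.unit⁻¹ : Matrix (Fin d) (Fin d) ℂ),
    hS0u.val_inv_mul, one_mul]


lemma lower_core {n d : ℕ} (U : Fin n → Bool → Matrix (Fin d) (Fin d) ℂ)
    (π : Equiv.Perm (Fin n)) (init : Fin d → ℂ) (acc : Finset (Fin d))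
    (hU : IsUnitaryFamily U) (hC : nuComputes U π init acc (ANDn n)) :
    n + 1 ≤ d := by
  classical
  have key : LinearIndependent ℂ (fun k : Fin (n + 1) => nuRun U π init (yInp π (k : ℕ) n)) := by
    rw [Fintype.linearIndependent_iff]
    intro g hg
    by_contra hcon
    push_neg at hcon
    obtain ⟨i0, hi0⟩ := hcon
    obtain ⟨m, hmmem, hmax'⟩ : ∃ m ∈ Finset.univ.filter (fun k : Fin (n + 1) => g k ≠ 0),
        ∀ k ∈ Finset.univ.filter (fun k : Fin (n + 1) => g k ≠ 0), k ≤ m := by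
      have hsne : (Finset.univ.filter fun k : Fin (n + 1) => g k ≠ 0).Nonempty :=
        ⟨i0, by simp [hi0]⟩
      exact ⟨_, Finset.max'_mem _ hsne, fun k hk => Finset.le_max' _ k hk⟩
    have hgm : g m ≠ 0 := (Finset.mem_filter.mp hmmem).2
    have hmax : ∀ k, g k ≠ 0 → k ≤ m := fun k hk => hmax' k (by simp [hk])
    have hmn : (m : ℕ) ≤ n := Nat.lt_succ_iff.mp m.isLt
    obtain ⟨L, hL⟩ := exists_L U π init hU hmn
    have hsum : ∑ k : Fin (n + 1), g k • L.mulVec (nuRun U π init (yInp π (k : ℕ) n)) = 0 := by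
      calc ∑ k : Fin (n + 1), g k • L.mulVec (nuRun U π init (yInp π (k : ℕ) n))
          = L.mulVecLin (∑ k : Fin (n + 1), g k • nuRun U π init (yInp π (k : ℕ) n)) := by
            rw [map_sum]
            refine Finset.sum_congr rfl fun k _ => ?_
            rw [map_smul, Matrix.mulVecLin_apply]
        _ = 0 := by rw [hg, map_zero]
    obtain ⟨q, hq, hqv⟩ : nuAccepts U π init acc (yInp π (m : ℕ) (m : ℕ)) :=
      (hC _).mpr (ANDn_yInp_self π (m : ℕ))
    have hq0 : ∀ k : Fin (n + 1), k ∈ Finset.univ → k ≠ m →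
        g k * (L.mulVec (nuRun U π init (yInp π (k : ℕ) n))) q = 0 := by
      intro k _ hkm
      by_cases hgk : g k = 0
      · rw [hgk, zero_mul]
      · have hkle : k ≤ m := hmax k hgk
        have hklt : (k : ℕ) < (m : ℕ) := by
          rcases lt_or_eq_of_le hkle with h | h
          · exact h
          · exact absurd h hkm
        have hrej : ¬ nuAccepts U π init acc (yInp π (k : ℕ) (m : ℕ)) := by
          intro hacc
          have h := (hC _).mp hacc
          rw [ANDn_yInp_lt π hklt hmn] at h
          exact Bool.false_ne_true h
        have hz : (L.mulVec (nuRun U π init (yInp π (k : ℕ) n))) q = 0 := by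
          rw [hL (k : ℕ) (le_of_lt hklt)]
          by_contra hne
          exact hrej ⟨q, hq, hne⟩
        rw [hz, mul_zero]
    have hq2 := congrFun hsum q
    rw [Finset.sum_apply] at hq2
    simp only [Pi.smul_apply, smul_eq_mul, Pi.zero_apply] at hq2
    rw [Finset.sum_eq_single_of_mem m (Finset.mem_univ m) hq0] at hq2
    rw [hL (m : ℕ) le_rfl] at hq2
    rcases mul_eq_zero.mp hq2 with h | h
    · exact hgm h
    · exact hqv h
  have hcard := key.fintype_card_le_finrank
  simpa [Module.finrank_fin_fun, Fintype.card_fin] using hcard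

/-- The cyclic-shift permutation matrix on `Fin (n+1)`. -/
noncomputable def cycM (n : ℕ) : Matrix (Fin (n + 1)) (Fin (n + 1)) ℂ :=
  Matrix.of fun i j => if i = j + 1 then 1 else 0

/-- The standard basis vector `e_a`. -/
noncomputable def eVec (n : ℕ) (a : Fin (n + 1)) : Fin (n + 1) → ℂ :=
  fun q => if q = a then 1 else 0

lemma cycM_mem_unitary (n : ℕ) : cycM n ∈ Matrix.unitaryGroup (Fin (n + 1)) ℂ := by
  rw [Matrix.mem_unitaryGroup_iff]
  ext i j
  rw [Matrix.mul_apply]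
  have hterm : ∀ k : Fin (n + 1),
      cycM n i k * star (cycM n) k j
        = if k = i - 1 then (if j = k + 1 then (1 : ℂ) else 0) else 0 := by
    intro k
    by_cases h : i = k + 1
    · have hk : k = i - 1 := by rw [h, add_sub_cancel_right]
      simp only [cycM, Matrix.star_apply, Matrix.of_apply]
      rw [if_pos h, if_pos hk, one_mul]
      by_cases hj : j = k + 1
      · rw [if_pos hj]
        exact star_one ℂ
      · rw [if_neg hj]
        exact star_zero ℂ
    · have hk : k ≠ i - 1 := fun hh => h (by rw [hh, sub_add_cancel])
      simp only [cycM, Matrix.star_apply, Matrix.of_apply]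
      rw [if_neg h, if_neg hk, zero_mul]
  rw [Finset.sum_congr rfl fun k _ => hterm k,
    Finset.sum_ite_eq' Finset.univ (i - 1) (fun k => if j = k + 1 then (1 : ℂ) else 0),
    if_pos (Finset.mem_univ _), sub_add_cancel, Matrix.one_apply]
  by_cases hji : j = i
  · rw [if_pos hji, if_pos hji.symm]
  · rw [if_neg hji, if_neg fun hh => hji hh.symm]

lemma cycM_mulVec_eVec (n : ℕ) (a : Fin (n + 1)) :
    (cycM n).mulVec (eVec n a) = eVec n (a + 1) := by
  ext i
  show (∑ j : Fin (n + 1), cycM n i j * eVec n a j) = eVec n (a + 1) i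
  have hterm : ∀ j : Fin (n + 1),
      cycM n i j * eVec n a j = if j = a then (if i = a + 1 then (1 : ℂ) else 0) else 0 := by
    intro j
    by_cases hj : j = a
    · subst hj
      simp [eVec, cycM]
    · simp only [eVec]
      rw [if_neg hj, if_neg hj, mul_zero]
  rw [Finset.sum_congr rfl fun j _ => hterm j,
    Finset.sum_ite_eq' Finset.univ a (fun _ => if i = a + 1 then (1 : ℂ) else 0),
    if_pos (Finset.mem_univ _)]
  rfl

/-- Counting function: number of ones among the first `m` bits. -/
def cntAux {n : ℕ} (x : Fin n → Bool) : ℕ → ℕ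
  | 0 => 0
  | m + 1 => cntAux x m + (if h : m < n then (if x ⟨m, h⟩ then 1 else 0) else 0)

lemma cntAux_le {n : ℕ} (x : Fin n → Bool) : ∀ m, cntAux x m ≤ m := by
  intro m
  induction m with
  | zero => exact le_refl 0
  | succ m ih =>
      show cntAux x m + _ ≤ m + 1
      have h1 : (if h : m < n then (if x ⟨m, h⟩ then 1 else 0) else 0) ≤ 1 := by
        split
        · split <;> omega
        · omega
      omega

lemma cntAux_eq_countOnes {n : ℕ} (x : Fin n → Bool) : cntAux x n = countOnes x := by
  have h1 : ∀ m, cntAux x m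
      = ∑ i ∈ Finset.range m, (if h : i < n then (if x ⟨i, h⟩ then 1 else 0) else 0) := by
    intro m
    induction m with
    | zero => rfl
    | succ m ih => rw [Finset.sum_range_succ, ← ih]; rfl
  rw [h1, countOnes, Finset.card_filter,
    ← Fin.sum_univ_eq_sum_range (fun i => if h : i < n then (if x ⟨i, h⟩ then 1 else 0) else 0) n]
  refine Finset.sum_congr rfl fun i _ => ?_
  simp [i.isLt]

lemma countOnes_eq_iff {n : ℕ} (x : Fin n → Bool) : countOnes x = n ↔ ∀ i, x i = true := by
  constructor
  · intro h i
    by_contra hx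
    have hsub : (Finset.univ.filter fun i => x i = true) ⊆ Finset.univ.erase i := by
      intro a ha
      rw [Finset.mem_erase]
      exact ⟨fun he => hx (he ▸ (Finset.mem_filter.mp ha).2), Finset.mem_univ a⟩
    have hcard := Finset.card_le_card hsub
    rw [Finset.card_erase_of_mem (Finset.mem_univ i), Finset.card_univ, Fintype.card_fin] at hcard
    have hn : 0 < n := i.pos
    rw [countOnes] at h
    omega
  · intro h
    rw [countOnes, Finset.filter_true_of_mem fun i _ => h i, Finset.card_univ, Fintype.card_fin]

/-- The width-`(n+1)` counter NUOBDD for `AND_n`. -/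
noncomputable def andU (n : ℕ) : Fin n → Bool → Matrix (Fin (n + 1)) (Fin (n + 1)) ℂ :=
  fun _ b => if b then cycM n else 1

lemma andU_run {n : ℕ} (x : Fin n → Bool) :
    ∀ m : ℕ, (pref (andU n) (Equiv.refl (Fin n)) x m).mulVec (eVec n 0)
      = eVec n ((cntAux x m : ℕ) : Fin (n + 1)) := by
  intro m
  induction m with
  | zero =>
      show (1 : Matrix (Fin (n + 1)) (Fin (n + 1)) ℂ).mulVec _ = _
      rw [Matrix.one_mulVec, show cntAux x 0 = 0 from rfl, Nat.cast_zero]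
  | succ m ih =>
      have hstep : pref (andU n) (Equiv.refl (Fin n)) x (m + 1)
          = step (andU n) (Equiv.refl (Fin n)) x m
            * pref (andU n) (Equiv.refl (Fin n)) x m := rfl
      rw [hstep, ← Matrix.mulVec_mulVec, ih]
      have hc : cntAux x (m + 1)
          = cntAux x m + (if h : m < n then (if x ⟨m, h⟩ then 1 else 0) else 0) := rfl
      by_cases h : m < n
      · by_cases hx : x ⟨m, h⟩ = true
        · have hc1 : cntAux x (m + 1) = cntAux x m + 1 := by
            rw [hc, dif_pos h, if_pos hx]
          have hs : step (andU n) (Equiv.refl (Fin n)) x m = cycM n := by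
            unfold step
            rw [dif_pos h]
            simp [andU, hx]
          rw [hs, cycM_mulVec_eVec, hc1]
          congr 1
          push_cast
          ring
        · have hc1 : cntAux x (m + 1) = cntAux x m := by
            rw [hc, dif_pos h, if_neg hx, add_zero]
          have hs : step (andU n) (Equiv.refl (Fin n)) x m = 1 := by
            unfold step
            rw [dif_pos h]
            simp [andU, hx]
          rw [hs, Matrix.one_mulVec, hc1]
      · have hc1 : cntAux x (m + 1) = cntAux x m := by
          rw [hc, dif_neg h, add_zero]
        have hs : step (andU n) (Equiv.refl (Fin n)) x m = 1 := by
          unfold step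
          rw [dif_neg h]
        rw [hs, Matrix.one_mulVec, hc1]

lemma upper_core (n : ℕ) :
    ∃ (U : Fin n → Bool → Matrix (Fin (n + 1)) (Fin (n + 1)) ℂ)
      (π : Equiv.Perm (Fin n)) (init : Fin (n + 1) → ℂ)
      (acc : Finset (Fin (n + 1))),
      IsUnitaryFamily U ∧ NormalizedInit init ∧
      nuComputes U π init acc (ANDn n) := by
  refine ⟨andU n, Equiv.refl (Fin n), eVec n 0, {Fin.last n}, ?_, ?_, ?_⟩
  · intro j b
    rcases b with _ | _
    · show (1 : Matrix (Fin (n + 1)) (Fin (n + 1)) ℂ) ∈ _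
      rw [Matrix.mem_unitaryGroup_iff]
      simp
    · exact cycM_mem_unitary n
  · show ∑ q : Fin (n + 1), ‖eVec n 0 q‖ ^ 2 = 1
    have hterm : ∀ q : Fin (n + 1),
        ‖eVec n 0 q‖ ^ 2 = if q = 0 then 1 else 0 := by
      intro q
      rcases eq_or_ne q 0 with h | h <;> simp [eVec, h]
    rw [Finset.sum_congr rfl fun q _ => hterm q,
      Finset.sum_ite_eq' Finset.univ (0 : Fin (n + 1)) (fun _ => (1 : ℝ)),
      if_pos (Finset.mem_univ _)]
  · intro x
    have hrun : nuRun (andU n) (Equiv.refl (Fin n)) (eVec n 0) x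
        = eVec n ((countOnes x : ℕ) : Fin (n + 1)) := by
      rw [nuRun_eq, andU_run, cntAux_eq_countOnes]
    have hlt : countOnes x < n + 1 := Nat.lt_succ_of_le (by
      rw [← cntAux_eq_countOnes]; exact cntAux_le x n)
    constructor
    · rintro ⟨q, hq, hne⟩
      rw [Finset.mem_singleton] at hq
      subst hq
      rw [hrun] at hne
      have hlast : Fin.last n = ((countOnes x : ℕ) : Fin (n + 1)) := by
        by_contra hcon
        exact hne (if_neg hcon)
      have hcount : countOnes x = n := by
        have hval := congrArg Fin.val hlast
        rw [Fin.val_last, Fin.val_cast_of_lt hlt] at hval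
        omega
      rw [ANDn, decide_eq_true_eq]
      exact (countOnes_eq_iff x).mp hcount
    · intro hand
      rw [ANDn, decide_eq_true_eq] at hand
      have hcount : countOnes x = n := (countOnes_eq_iff x).mpr hand
      refine ⟨Fin.last n, Finset.mem_singleton_self _, ?_⟩
      rw [hrun, hcount]
      have hl : Fin.last n = ((n : ℕ) : Fin (n + 1)) := by
        rw [Fin.ext_iff, Fin.val_last, Fin.val_cast_of_lt (Nat.lt_succ_self n)]
      show (if Fin.last n = ((n : ℕ) : Fin (n + 1)) then (1 : ℂ) else 0) ≠ 0
      rw [if_pos hl]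
      exact one_ne_zero

end NUAux

/-- Every nondeterministic unitary OBDD computing `AND_n` has width at least
`n + 1`; moreover there is a nondeterministic unitary OBDD of width `n + 1`
computing `AND_n`. -/
theorem nuobdd_and_bounds (n : ℕ) :
    (∀ (d : ℕ) (U : Fin n → Bool → Matrix (Fin d) (Fin d) ℂ)
      (π : Equiv.Perm (Fin n)) (init : Fin d → ℂ) (acc : Finset (Fin d)),
      IsUnitaryFamily U → NormalizedInit init →
      nuComputes U π init acc (ANDn n) → n + 1 ≤ d) ∧
    (∃ (U : Fin n → Bool → Matrix (Fin (n + 1)) (Fin (n + 1)) ℂ)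
      (π : Equiv.Perm (Fin n)) (init : Fin (n + 1) → ℂ)
      (acc : Finset (Fin (n + 1))),
      IsUnitaryFamily U ∧ NormalizedInit init ∧
      nuComputes U π init acc (ANDn n)) := by
  exact ⟨fun d U π init acc hU _ hC => NUAux.lower_core U π init acc hU hC,
    NUAux.upper_core n⟩
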